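/- For every nonnegative integers n and ℓ and every u with 0 < u < π, one has (D^n g_{ℓ,n})(u) = 2^n · n! · C_{2ℓ}^{(n+1)}(cos u), where g_{ℓ,n}(u) = sin((2ℓ+n+1)u)/sin(u) and D^n is the n-th iterate of the operator D defined by (Df)(u) = −(1/sin u) f′(u). -/

import Mathlib

open Real MeasureTheory

/-- Generalized binomial coefficient `C(a, j) = a(a-1)⋯(a-j+1)/j!`. -/
noncomputable def genBinom (a : ℝ) (j : ℕ) : ℝ :=
  (∏ i ∈ Finset.range j, (a - i)) / (Nat.factorial j)

/-- Jacobi polynomial `P_ℓ^{(α,β)}(x)`. -/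
noncomputable def jacobiP (α β : ℝ) (l : ℕ) (x : ℝ) : ℝ :=
  ∑ k ∈ Finset.range (l + 1),
    genBinom ((l : ℝ) + α) (l - k) * genBinom ((l : ℝ) + β) k *
      ((x - 1) / 2) ^ k * ((x + 1) / 2) ^ (l - k)

/-- Gegenbauer (ultraspherical) polynomial `C_m^{(λ)}(x)`. -/
noncomputable def gegenbauerC (m : ℕ) (lam : ℝ) (x : ℝ) : ℝ :=
  ∑ k ∈ Finset.range (m / 2 + 1),
    (-1 : ℝ) ^ k *
      (Real.Gamma (lam + m - k) /
        (Real.Gamma lam * (Nat.factorial k) * (Nat.factorial (m - 2 * k)))) *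
      (2 * x) ^ (m - 2 * k)

/-- Pochhammer symbol `(q)_k = q(q+1)⋯(q+k-1)`. -/
noncomputable def poch (q : ℝ) (k : ℕ) : ℝ := ∏ i ∈ Finset.range k, (q + i)

/-- Terminating Gauss hypergeometric function `₂F₁(-m, b; c; z)`. -/
noncomputable def hyp2F1 (m : ℕ) (b c z : ℝ) : ℝ :=
  ∑ k ∈ Finset.range (m + 1),
    poch (-(m : ℝ)) k * poch b k / (poch c k * (Nat.factorial k)) * z ^ k

/-- The operator `(Df)(u) = -(1/sin u) f'(u)`. -/
noncomputable def Dop (f : ℝ → ℝ) : ℝ → ℝ := fun u => -(1 / Real.sin u) * deriv f u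

/-! ### Auxiliary development -/

/-- Chebyshev-U-like sum with flexible summation range. -/
noncomputable def Tsum (m N : ℕ) (x : ℝ) : ℝ :=
  ∑ k ∈ Finset.range N, ((-1 : ℝ) ^ k * ((m - k).choose k) * (2 * x) ^ (m - 2 * k))

lemma Tsum_ext (m : ℕ) (x : ℝ) {N : ℕ} (hN : m / 2 + 1 ≤ N) :
    Tsum m N x = Tsum m (m / 2 + 1) x := by
  unfold Tsum
  apply (Finset.sum_subset (Finset.range_subset_range.mpr hN) ?_).symm
  intro k hk1 hk2
  simp only [Finset.mem_range, not_lt] at hk1 hk2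
  have h : m - k < k := by omega
  simp [Nat.choose_eq_zero_of_lt h]

lemma Tsum_key (m k : ℕ) (x : ℝ) :
    ((-1 : ℝ) ^ (k+1) * (((m+2) - (k+1)).choose (k+1)) * (2*x) ^ ((m+2) - 2*(k+1)))
      = 2*x * ((-1 : ℝ) ^ (k+1) * (((m+1) - (k+1)).choose (k+1)) * (2*x) ^ ((m+1) - 2*(k+1)))
        - ((-1 : ℝ) ^ k * ((m - k).choose k) * (2*x) ^ (m - 2*k)) := by
  by_cases hk : k ≤ m
  · have e1 : (m+2) - (k+1) = (m - k) + 1 := by omega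
    have e2 : (m+1) - (k+1) = m - k := by omega
    have e3 : (m+2) - 2*(k+1) = m - 2*k := by omega
    rw [e1, e2, e3, Nat.choose_succ_succ']
    by_cases h : 2*k + 1 ≤ m
    · have e4 : (m+1) - 2*(k+1) = (m - 2*k) - 1 := by omega
      have e5 : m - 2*k = ((m - 2*k) - 1) + 1 := by omega
      rw [e4, e5]
      push_cast
      rw [pow_succ]
      ring
    · have hz : (m - k).choose (k+1) = 0 := by
        apply Nat.choose_eq_zero_of_lt; omega
      have e4 : (m+1) - 2*(k+1) = 0 := by omega
      have e5 : m - 2*k = 0 := by omega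
      rw [hz, e4, e5]
      push_cast
      ring
  · have a1 : ((m+2) - (k+1)).choose (k+1) = 0 := Nat.choose_eq_zero_of_lt (by omega)
    have a2 : ((m+1) - (k+1)).choose (k+1) = 0 := Nat.choose_eq_zero_of_lt (by omega)
    have a3 : (m - k).choose k = 0 := Nat.choose_eq_zero_of_lt (by omega)
    rw [a1, a2, a3]
    push_cast
    ring

lemma Tsum_rec_aux (m N : ℕ) (x : ℝ) :
    Tsum (m+2) (N+1) x = 2*x * Tsum (m+1) (N+1) x - Tsum m N x := by
  unfold Tsum
  rw [Finset.sum_range_succ' (fun k => ((-1 : ℝ) ^ k * (((m+2) - k).choose k) * (2*x) ^ ((m+2) - 2*k))) N,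
      Finset.sum_range_succ' (fun k => ((-1 : ℝ) ^ k * (((m+1) - k).choose k) * (2*x) ^ ((m+1) - 2*k))) N]
  have : ∀ k ∈ Finset.range N,
      ((-1 : ℝ) ^ (k+1) * (((m+2) - (k+1)).choose (k+1)) * (2*x) ^ ((m+2) - 2*(k+1)))
        = 2*x * ((-1 : ℝ) ^ (k+1) * (((m+1) - (k+1)).choose (k+1)) * (2*x) ^ ((m+1) - 2*(k+1)))
          - ((-1 : ℝ) ^ k * ((m - k).choose k) * (2*x) ^ (m - 2*k)) :=
    fun k _ => Tsum_key m k x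
  rw [Finset.sum_congr rfl this, Finset.sum_sub_distrib, ← Finset.mul_sum]
  simp only [pow_zero, Nat.choose_zero_right, Nat.cast_one, one_mul, Nat.sub_zero, Nat.mul_zero]
  ring

lemma Tsum_rec (m : ℕ) (x : ℝ) :
    Tsum (m+2) ((m+2)/2 + 1) x
      = 2*x * Tsum (m+1) ((m+1)/2 + 1) x - Tsum m (m/2 + 1) x := by
  have h1 : (m+2)/2 + 1 = (m/2 + 1) + 1 := by omega
  rw [h1, Tsum_rec_aux m (m/2 + 1) x, Tsum_ext (m+1) x (by omega)]

lemma gegen_one (m : ℕ) (x : ℝ) : gegenbauerC m 1 x = Tsum m (m/2 + 1) x := by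
  unfold gegenbauerC Tsum
  apply Finset.sum_congr rfl
  intro k hk
  simp only [Finset.mem_range] at hk
  have hk2 : 2*k ≤ m := by omega
  have hkm : k ≤ m - k := by omega
  have h1 : (1:ℝ) + (m:ℝ) - (k:ℝ) = ((m - k : ℕ) : ℝ) + 1 := by
    push_cast [Nat.cast_sub (by omega : k ≤ m)]; ring
  rw [h1, Real.Gamma_nat_eq_factorial, Real.Gamma_one]
  have hfac := Nat.choose_mul_factorial_mul_factorial hkm
  have e : m - k - k = m - 2*k := by omega
  rw [e] at hfac
  have hc : ((m - k).factorial : ℝ) = ((m - k).choose k : ℝ) * (k.factorial : ℝ) * ((m - 2*k).factorial : ℝ) := by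
    exact_mod_cast congrArg (Nat.cast (R := ℝ)) hfac.symm
  rw [hc]
  have hkf : (k.factorial : ℝ) ≠ 0 := by positivity
  have hmf : ((m - 2*k).factorial : ℝ) ≠ 0 := by positivity
  field_simp

lemma sin_T (m : ℕ) : ∀ v : ℝ,
    Real.sin (((m:ℝ) + 1) * v) = Real.sin v * Tsum m (m/2 + 1) (Real.cos v) := by
  induction m using Nat.strong_induction_on with
  | _ m ih =>
    match m, ih with
    | 0, _ => intro v; simp [Tsum]
    | 1, _ =>
      intro v
      have : ((1:ℕ):ℝ) + 1 = 2 := by norm_num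
      rw [this, Real.sin_two_mul]
      simp [Tsum, Finset.sum_range_succ]
      ring
    | (m+2), ih =>
      intro v
      have h1 := ih (m+1) (by omega) v
      have h2 := ih m (by omega) v
      have trig : Real.sin ((((m:ℕ)+2:ℕ):ℝ) + 1) * v = 0 → True := fun _ => trivial
      have key : Real.sin (((m:ℝ) + 2 + 1) * v)
          = 2 * Real.cos v * Real.sin (((m:ℝ) + 1 + 1) * v) - Real.sin (((m:ℝ) + 1) * v) := by
        have e1 : ((m:ℝ) + 2 + 1) * v = ((m:ℝ) + 1 + 1) * v + v := by ring
        have e2 : ((m:ℝ) + 1) * v = ((m:ℝ) + 1 + 1) * v - v := by ring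
        rw [e1, e2, Real.sin_add, Real.sin_sub]
        ring
      rw [Tsum_rec]
      push_cast at h1 h2 ⊢
      rw [key, h1, h2]
      ring

lemma sin_gegen (m : ℕ) (v : ℝ) :
    Real.sin (((m:ℝ) + 1) * v) = Real.sin v * gegenbauerC m 1 (Real.cos v) := by
  rw [gegen_one]; exact sin_T m v

lemma gegen_deriv (m : ℕ) {lam : ℝ} (hlam : 0 < lam) (x : ℝ) :
    HasDerivAt (fun y => gegenbauerC (m+1) lam y) (2 * lam * gegenbauerC m (lam+1) x) x := by
  have hΓ : Real.Gamma lam ≠ 0 := (Real.Gamma_pos_of_pos hlam).ne'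
  have main : HasDerivAt (fun y => gegenbauerC (m+1) lam y)
      (∑ k ∈ Finset.range ((m+1)/2 + 1),
        (-1 : ℝ) ^ k *
          (Real.Gamma (lam + ((m+1:ℕ):ℝ) - (k:ℝ)) /
            (Real.Gamma lam * (Nat.factorial k) * (Nat.factorial ((m+1) - 2*k)))) *
          ((((m+1) - 2*k : ℕ):ℝ) * (2*x) ^ ((m+1) - 2*k - 1) * 2)) x := by
    unfold gegenbauerC
    apply HasDerivAt.fun_sum
    intro k hk
    have hp : HasDerivAt (fun y : ℝ => (2*y) ^ ((m+1) - 2*k))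
        ((((m+1) - 2*k : ℕ):ℝ) * (2*x) ^ ((m+1) - 2*k - 1) * 2) x := by
      have := (HasDerivAt.const_mul (2:ℝ) (hasDerivAt_id x)).fun_pow ((m+1) - 2*k)
      simpa using this
    exact hp.const_mul _
  have hsum : (∑ k ∈ Finset.range ((m+1)/2 + 1),
        (-1 : ℝ) ^ k *
          (Real.Gamma (lam + ((m+1:ℕ):ℝ) - (k:ℝ)) /
            (Real.Gamma lam * (Nat.factorial k) * (Nat.factorial ((m+1) - 2*k)))) *
          ((((m+1) - 2*k : ℕ):ℝ) * (2*x) ^ ((m+1) - 2*k - 1) * 2))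
      = 2 * lam * gegenbauerC m (lam+1) x := by
    unfold gegenbauerC
    rw [Finset.mul_sum]
    rw [← Finset.sum_subset (Finset.range_subset_range.mpr (show m/2 + 1 ≤ (m+1)/2 + 1 by omega)) ?_]
    · apply Finset.sum_congr rfl
      intro k hk
      simp only [Finset.mem_range] at hk
      have h2k : 2*k ≤ m := by omega
      have e1 : (m+1) - 2*k - 1 = m - 2*k := by omega
      have e2 : (m+1) - 2*k = (m - 2*k) + 1 := by omega
      have eΓ : lam + ((m+1:ℕ):ℝ) - (k:ℝ) = (lam + 1) + (m:ℝ) - (k:ℝ) := by push_cast; ring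
      rw [e1, e2, eΓ, Real.Gamma_add_one hlam.ne']
      have hkf : ((Nat.factorial k : ℕ) : ℝ) ≠ 0 := by positivity
      have hmf : ((Nat.factorial (m - 2*k) : ℕ) : ℝ) ≠ 0 := by positivity
      have hp1 : (((m - 2*k : ℕ) : ℝ) + 1) ≠ 0 := by positivity
      have hcast : ((Nat.factorial ((m - 2*k) + 1) : ℕ) : ℝ)
          = (((m - 2*k : ℕ) : ℝ) + 1) * ((Nat.factorial (m - 2*k) : ℕ) : ℝ) := by
        rw [Nat.factorial_succ]; push_cast; ring
      have hcast2 : (((m - 2*k) + 1 : ℕ) : ℝ) = ((m - 2*k : ℕ) : ℝ) + 1 := by push_cast; ring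
      rw [hcast, hcast2]
      have hl0 : lam ≠ 0 := hlam.ne'
      have halg : ∀ (A K F p X s : ℝ), K ≠ 0 → F ≠ 0 → (p+1) ≠ 0 →
          s * (A / (Real.Gamma lam * K * ((p+1)*F))) * ((p+1) * X * 2)
            = 2*lam*(s * (A / (lam * Real.Gamma lam * K * F)) * X) := by
        intro A K F p X s hK hF hp
        field_simp
      exact halg _ _ _ _ _ _ hkf hmf hp1
    · intro k hk1 hk2
      simp only [Finset.mem_range, not_lt] at hk1 hk2
      have : (m+1) - 2*k = 0 := by omega
      simp [this]
  exact hsum ▸ main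

lemma Dop_congr_iter (n : ℕ) {f g : ℝ → ℝ} {u : ℝ} (h : f =ᶠ[nhds u] g) :
    Dop^[n] f =ᶠ[nhds u] Dop^[n] g := by
  induction n generalizing f g with
  | zero => simpa
  | succ n ih =>
    rw [Function.iterate_succ_apply, Function.iterate_succ_apply]
    apply ih
    have hd : deriv f =ᶠ[nhds u] deriv g := h.deriv
    filter_upwards [hd] with v hv
    unfold Dop
    rw [hv]

lemma Dop_const_mul (c : ℝ) (f : ℝ → ℝ) :
    Dop (fun v => c * f v) = fun v => c * Dop f v := by
  funext v
  unfold Dop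
  rw [deriv_const_mul_field]
  ring

lemma Dop_iter_const_mul (n : ℕ) (c : ℝ) (f : ℝ → ℝ) :
    Dop^[n] (fun v => c * f v) = fun v => c * Dop^[n] f v := by
  induction n generalizing f with
  | zero => rfl
  | succ n ih =>
    rw [Function.iterate_succ_apply, Dop_const_mul, ih, Function.iterate_succ_apply]

lemma main_aux : ∀ (n m : ℕ) (lam : ℝ), 0 < lam → ∀ u ∈ Set.Ioo (0:ℝ) π,
    Dop^[n] (fun v => gegenbauerC (m+n) lam (Real.cos v)) u
      = (∏ i ∈ Finset.range n, (2 * (lam + (i:ℝ)))) * gegenbauerC m (lam + (n:ℝ)) (Real.cos u) := by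
  intro n
  induction n with
  | zero => intro m lam hlam u hu; simp
  | succ n ih =>
    intro m lam hlam u hu
    rw [Function.iterate_succ_apply]
    have hcongr : Dop (fun v => gegenbauerC (m+(n+1)) lam (Real.cos v))
        =ᶠ[nhds u] (fun v => 2 * lam * gegenbauerC (m+n) (lam+1) (Real.cos v)) := by
      filter_upwards [isOpen_Ioo.mem_nhds hu] with v hv
      have hs : Real.sin v ≠ 0 := (Real.sin_pos_of_pos_of_lt_pi hv.1 hv.2).ne'
      have hD : HasDerivAt (fun w => gegenbauerC (m+(n+1)) lam (Real.cos w))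
          ((2 * lam * gegenbauerC (m+n) (lam+1) (Real.cos v)) * (-Real.sin v)) v :=
        (gegen_deriv (m+n) hlam (Real.cos v)).comp v (Real.hasDerivAt_cos v)
      show -(1 / Real.sin v) * deriv (fun v => gegenbauerC (m+(n+1)) lam (Real.cos v)) v = _
      rw [hD.deriv]
      field_simp
    rw [(Dop_congr_iter n hcongr).eq_of_nhds, Dop_iter_const_mul]
    show 2 * lam * Dop^[n] (fun v => gegenbauerC (m+n) (lam+1) (Real.cos v)) u = _
    rw [ih m (lam+1) (by linarith) u hu]
    have hprod : (∏ i ∈ Finset.range (n+1), (2 * (lam + (i:ℝ))))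
        = 2 * lam * ∏ i ∈ Finset.range n, (2 * ((lam+1) + (i:ℝ))) := by
      rw [Finset.prod_range_succ']
      have h0 : 2 * (lam + ((0:ℕ):ℝ)) = 2 * lam := by norm_num
      rw [h0, mul_comm]
      congr 1
      apply Finset.prod_congr rfl
      intro i _
      push_cast
      ring
    have harg : (lam + 1) + (n:ℝ) = lam + ((n+1:ℕ):ℝ) := by push_cast; ring
    rw [hprod, harg]
    ring

lemma prod_two (n : ℕ) : (∏ i ∈ Finset.range n, (2 * ((1:ℝ) + (i:ℝ)))) = 2 ^ n * (Nat.factorial n : ℝ) := by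
  induction n with
  | zero => simp
  | succ n ih =>
    rw [Finset.prod_range_succ, ih, Nat.factorial_succ]
    push_cast
    ring

theorem statement_4 (n l : ℕ) (u : ℝ) (hu1 : 0 < u) (hu2 : u < π) :
    (Dop^[n] (fun v => Real.sin ((2 * (l : ℝ) + n + 1) * v) / Real.sin v)) u
      = 2 ^ n * (Nat.factorial n : ℝ) * gegenbauerC (2 * l) ((n : ℝ) + 1) (Real.cos u) := by
  have hu : u ∈ Set.Ioo (0:ℝ) π := ⟨hu1, hu2⟩
  have hfe : (fun v => Real.sin ((2 * (l : ℝ) + n + 1) * v) / Real.sin v)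
      =ᶠ[nhds u] (fun v => gegenbauerC (2*l + n) 1 (Real.cos v)) := by
    filter_upwards [isOpen_Ioo.mem_nhds hu] with v hv
    have hs : Real.sin v ≠ 0 := (Real.sin_pos_of_pos_of_lt_pi hv.1 hv.2).ne'
    have h := sin_gegen (2*l + n) v
    have e : (2 * (l : ℝ) + n + 1) = ((2*l + n : ℕ):ℝ) + 1 := by push_cast; ring
    rw [e, h]
    field_simp
  rw [(Dop_congr_iter n hfe).eq_of_nhds, main_aux n (2*l) 1 one_pos u hu, prod_two]
  have : (1:ℝ) + (n:ℝ) = (n:ℝ) + 1 := by ring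
  rw [this]
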